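/- Let φ_1, …, φ_n : ℝ → ℝ be continuous escorts, let x̂ ∈ ℝ^n have all components in (0,1], and let x : I → ℝ^n be a differentiable curve on an open interval I with all components x_i(t) ∈ (0,1]. Then the function t ↦ D_φ(x̂, x(t)) is differentiable and d/dt D_φ(x̂, x(t)) = −Σ_{i=1}^n (x̂_i − x_i(t)) · x_i'(t)/φ_i(x_i(t)). -/

import Mathlib

open scoped BigOperators

/-- An escort: a real function that is nondecreasing and strictly positive on `(0,1]`. -/
def IsEscort (φ : ℝ → ℝ) : Prop :=
  MonotoneOn φ (Set.Ioc (0:ℝ) 1) ∧ ∀ x ∈ Set.Ioc (0:ℝ) 1, 0 < φ x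

/-- The escort logarithm `log_φ(x) = ∫_1^x dv / φ(v)`. -/
noncomputable def escortLog (φ : ℝ → ℝ) (x : ℝ) : ℝ :=
  ∫ v in (1:ℝ)..x, 1 / φ v

/-- The escort divergence
`D_φ(x, y) = Σ_i ∫_{y_i}^{x_i} (log_{φ_i}(u) − log_{φ_i}(y_i)) du`. -/
noncomputable def escortDiv {n : ℕ} (φ : Fin n → ℝ → ℝ) (x y : Fin n → ℝ) : ℝ :=
  ∑ i, ∫ u in (y i)..(x i), (escortLog (φ i) u - escortLog (φ i) (y i))

private lemma escortLog_hasDerivAt {ψ : ℝ → ℝ} (hc : Continuous ψ)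
    (hpos : ∀ v, 0 < ψ v) (y : ℝ) :
    HasDerivAt (escortLog ψ) (1 / ψ y) y := by
  have h1 : Continuous fun v => 1 / ψ v := continuous_const.div hc fun v => (hpos v).ne'
  exact intervalIntegral.integral_hasDerivAt_right
    (h1.intervalIntegrable 1 y) (h1.stronglyMeasurableAtFilter _ _) h1.continuousAt

private lemma escortLog_continuous {ψ : ℝ → ℝ} (hc : Continuous ψ)
    (hpos : ∀ v, 0 < ψ v) : Continuous (escortLog ψ) :=
  (Differentiable.continuous fun u => (escortLog_hasDerivAt hc hpos u).differentiableAt)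

private lemma escortG_hasDerivAt {ψ : ℝ → ℝ} (hc : Continuous ψ) (hpos : ∀ v, 0 < ψ v)
    (c y : ℝ) :
    HasDerivAt (fun z => ∫ u in z..c, (escortLog ψ u - escortLog ψ z))
      (-((c - y) * (1 / ψ y))) y := by
  have hL : Continuous (escortLog ψ) := escortLog_continuous hc hpos
  have heq : ∀ z, (∫ u in z..c, (escortLog ψ u - escortLog ψ z))
      = (∫ u in z..c, escortLog ψ u) - (c - z) * escortLog ψ z := by
    intro z
    rw [intervalIntegral.integral_sub (hL.intervalIntegrable _ _) intervalIntegrable_const,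
      intervalIntegral.integral_const, smul_eq_mul]
  have h1 : HasDerivAt (fun z => ∫ u in z..c, escortLog ψ u) (-(escortLog ψ y)) y := by
    have h1' : HasDerivAt (fun z => ∫ u in c..z, escortLog ψ u) (escortLog ψ y) y :=
      intervalIntegral.integral_hasDerivAt_right (hL.intervalIntegrable c y)
        (hL.stronglyMeasurableAtFilter _ _) hL.continuousAt
    have := h1'.neg
    refine this.congr_of_eventuallyEq (Filter.Eventually.of_forall fun z => ?_)
    exact intervalIntegral.integral_symm c z
  have h2 : HasDerivAt (fun z => (c - z) * escortLog ψ z)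
      ((-1) * escortLog ψ y + (c - y) * (1 / ψ y)) y := by
    have hc' : HasDerivAt (fun z : ℝ => c - z) (-1) y := by
      simpa using (hasDerivAt_id y).const_sub c
    exact hc'.mul (escortLog_hasDerivAt hc hpos y)
  have h3 := h1.sub h2
  have h4 : HasDerivAt (fun z => (∫ u in z..c, escortLog ψ u) - (c - z) * escortLog ψ z)
      (-((c - y) * (1 / ψ y))) y := by
    exact h3.congr_deriv (by ring)
  exact h4.congr_of_eventuallyEq (Filter.Eventually.of_forall fun z => heq z)

/-- continuous-time derivative of the escort divergence along a
differentiable curve with values componentwise in `(0,1]`: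
`d/dt D_φ(x̂, x(t)) = −Σ_i (x̂_i − x_i(t)) · x_i'(t)/φ_i(x_i(t))`. -/
theorem escortDiv_hasDerivAt {n : ℕ}
    (φ : Fin n → ℝ → ℝ) (hφ : ∀ i, IsEscort (φ i))
    (hcont : ∀ i, ContinuousOn (φ i) (Set.Ioc (0:ℝ) 1))
    (xhat : Fin n → ℝ) (hxhat : ∀ i, xhat i ∈ Set.Ioc (0:ℝ) 1)
    (a b : ℝ) (x x' : ℝ → Fin n → ℝ)
    (hx : ∀ t ∈ Set.Ioo a b, ∀ i, x t i ∈ Set.Ioc (0:ℝ) 1)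
    (hderiv : ∀ t ∈ Set.Ioo a b, ∀ i, HasDerivAt (fun s => x s i) (x' t i) t) :
    ∀ t ∈ Set.Ioo a b,
      HasDerivAt (fun s => escortDiv φ xhat (x s))
        (-∑ i, (xhat i - x t i) * x' t i / φ i (x t i)) t := by
  intro t ht
  -- per-coordinate cutoff
  set ε : Fin n → ℝ := fun i => min (xhat i) (x t i) / 2 with hε
  have hε_pos : ∀ i, 0 < ε i := fun i =>
    div_pos (lt_min (hxhat i).1 (hx t ht i).1) two_pos
  have hε_lt_xhat : ∀ i, ε i < xhat i := fun i =>
    lt_of_lt_of_le (half_lt_self (lt_min (hxhat i).1 (hx t ht i).1)) (min_le_left _ _)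
  have hε_lt_xt : ∀ i, ε i < x t i := fun i =>
    lt_of_lt_of_le (half_lt_self (lt_min (hxhat i).1 (hx t ht i).1)) (min_le_right _ _)
  -- clamp and the extended escort
  set clamp : Fin n → ℝ → ℝ := fun i v => min (max v (ε i)) 1 with hclamp
  have hclamp_mem : ∀ i v, clamp i v ∈ Set.Ioc (0:ℝ) 1 := by
    intro i v
    refine ⟨lt_min (lt_of_lt_of_le (hε_pos i) (le_max_right _ _)) one_pos, min_le_right _ _⟩
  have hclamp_cont : ∀ i, Continuous (clamp i) :=
    fun i => (continuous_id.max continuous_const).min continuous_const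
  have hclamp_eq : ∀ i, ∀ v ∈ Set.Icc (ε i) 1, clamp i v = v := by
    intro i v hv
    simp only [hclamp]
    rw [max_eq_left hv.1, min_eq_left hv.2]
  set ψ : Fin n → ℝ → ℝ := fun i v => φ i (clamp i v) with hψ
  have hψ_cont : ∀ i, Continuous (ψ i) :=
    fun i => (hcont i).comp_continuous (hclamp_cont i) (hclamp_mem i)
  have hψ_pos : ∀ i v, 0 < ψ i v := fun i v => (hφ i).2 _ (hclamp_mem i v)
  have hψ_eq : ∀ i, ∀ v ∈ Set.Icc (ε i) 1, ψ i v = φ i v := by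
    intro i v hv; simp only [hψ]; rw [hclamp_eq i v hv]
  -- escortLog agrees on [ε i, 1]
  have hlog_eq : ∀ i, ∀ u ∈ Set.Icc (ε i) 1, escortLog (ψ i) u = escortLog (φ i) u := by
    intro i u hu
    unfold escortLog
    apply intervalIntegral.integral_congr
    intro v hv
    have hv' : v ∈ Set.Icc (ε i) 1 := by
      rw [Set.uIcc_of_ge hu.2] at hv
      exact ⟨le_trans hu.1 hv.1, hv.2⟩
    simp [hψ_eq i v hv']
  -- the per-coordinate potential wrt ψ
  have hG : ∀ i, HasDerivAt
      (fun z => ∫ u in z..(xhat i), (escortLog (ψ i) u - escortLog (ψ i) z))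
      (-((xhat i - x t i) * (1 / ψ i (x t i)))) (x t i) :=
    fun i => escortG_hasDerivAt (hψ_cont i) (hψ_pos i) (xhat i) (x t i)
  -- compose with the curve and sum
  have hsum : HasDerivAt
      (fun s => ∑ i, ∫ u in (x s i)..(xhat i), (escortLog (ψ i) u - escortLog (ψ i) (x s i)))
      (∑ i, (-((xhat i - x t i) * (1 / ψ i (x t i)))) * x' t i) t := by
    apply HasDerivAt.fun_sum
    intro i _
    exact (hG i).comp t (hderiv t ht i)
  -- eventual equality with escortDiv φ
  have hev : (fun s => escortDiv φ xhat (x s)) =ᶠ[nhds t]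
      (fun s => ∑ i, ∫ u in (x s i)..(xhat i),
        (escortLog (ψ i) u - escortLog (ψ i) (x s i))) := by
    have h1 : ∀ᶠ s in nhds t, s ∈ Set.Ioo a b := isOpen_Ioo.mem_nhds ht
    have h2 : ∀ᶠ s in nhds t, ∀ i, ε i < x s i := by
      rw [Filter.eventually_all]
      intro i
      exact (hderiv t ht i).continuousAt.preimage_mem_nhds (Ioi_mem_nhds (hε_lt_xt i))
    filter_upwards [h1, h2] with s hs1 hs2
    unfold escortDiv
    apply Finset.sum_congr rfl
    intro i _
    have hxs : x s i ∈ Set.Icc (ε i) 1 := ⟨le_of_lt (hs2 i), (hx s hs1 i).2⟩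
    have hxh : xhat i ∈ Set.Icc (ε i) 1 := ⟨le_of_lt (hε_lt_xhat i), (hxhat i).2⟩
    apply intervalIntegral.integral_congr
    intro u hu
    have hu' : u ∈ Set.Icc (ε i) 1 := by
      rcases hu with ⟨h1, h2⟩
      exact ⟨le_trans (le_min hxs.1 hxh.1) h1, le_trans h2 (max_le hxs.2 hxh.2)⟩
    simp only [hlog_eq i u hu', hlog_eq i (x s i) hxs]
  -- conclude
  have hfinal := hsum.congr_of_eventuallyEq hev
  refine hfinal.congr_deriv ?_
  symm
  rw [neg_eq_iff_eq_neg, ← Finset.sum_neg_distrib]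
  apply Finset.sum_congr rfl
  intro i _
  rw [hψ_eq i (x t i) ⟨le_of_lt (hε_lt_xt i), (hx t ht i).2⟩]
  ring
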